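/- Let B be a self-adjoint operator on a Hilbert space H. Let ω : [0,∞) → [0,∞) be continuous, nondecreasing, ω(0) = 0, ω(2t) ≤ c·ω(t) for some c > 0, and ∫₀¹ ω(t)/t dt < ∞. Let G : ℝ → ℝ be even, nonnegative, nondecreasing on [0,∞), with sup_{λ>0} G(2λ)/G(λ) < ∞. If x ∈ H satisfies E_r(x,B) ≤ (m/G(r))·ω(1/r) for all r > 0 and some m > 0, then x ∈ D(G(B)). -/

import Mathlib

open MeasureTheory Complex Set Real intervalIntegral


open scoped ENNReal NNReal


private lemma dini_summable (ω : ℝ → ℝ)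
    (hωmono : MonotoneOn ω (Ici (0 : ℝ)))
    (hωnonneg : ∀ t, 0 ≤ t → 0 ≤ ω t)
    (hωint : IntervalIntegrable (fun t => ω t / t) MeasureTheory.volume 0 1) :
    Summable (fun k : ℕ => ω (1 / 2 ^ k)) := by
  rw [← summable_nat_add_iff 1]
  have hpos : ∀ k : ℕ, (0:ℝ) < 1 / 2 ^ k := fun k => by positivity
  have hle : ∀ k : ℕ, (1:ℝ) / 2 ^ k ≤ 1 := fun k => by
    rw [div_le_one (by positivity)]; exact one_le_pow₀ one_le_two
  have hstep : ∀ k : ℕ, (1:ℝ) / 2 ^ (k+1) ≤ 1 / 2 ^ k := by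
    intro k
    apply div_le_div_of_nonneg_left one_pos.le (by positivity)
    exact pow_le_pow_right₀ one_le_two (Nat.le_succ k)
  -- integrability on each dyadic interval
  have hint : ∀ k : ℕ, IntervalIntegrable (fun t => ω t / t) MeasureTheory.volume
      (1 / 2 ^ (k+1)) (1 / 2 ^ k) := by
    intro k
    refine hωint.mono_set ?_
    rw [uIcc_of_le (hstep k), uIcc_of_le zero_le_one]
    exact Icc_subset_Icc (hpos (k+1)).le (hle k)
  -- per-term bound
  have hterm : ∀ k : ℕ, ω (1 / 2 ^ (k+1)) ≤
      2 * ∫ t in (1 / 2 ^ (k+1) : ℝ)..(1 / 2 ^ k : ℝ), ω t / t := by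
    intro k
    have hconst : ∫ t in (1 / 2 ^ (k+1) : ℝ)..(1 / 2 ^ k : ℝ),
        (ω (1 / 2 ^ (k+1)) * 2 ^ k) = ω (1 / 2 ^ (k+1)) / 2 := by
      rw [intervalIntegral.integral_const, smul_eq_mul]
      field_simp
      ring
    have hmono' : ∫ t in (1 / 2 ^ (k+1) : ℝ)..(1 / 2 ^ k : ℝ),
        (ω (1 / 2 ^ (k+1)) * 2 ^ k) ≤ ∫ t in (1 / 2 ^ (k+1) : ℝ)..(1 / 2 ^ k : ℝ), ω t / t := by
      apply intervalIntegral.integral_mono_on (hstep k) intervalIntegrable_const (hint k)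
      intro t ht
      obtain ⟨ht1, ht2⟩ := ht
      have ht0 : 0 < t := lt_of_lt_of_le (hpos (k+1)) ht1
      have h1 : ω (1 / 2 ^ (k+1)) ≤ ω t := hωmono (hpos (k+1)).le ht0.le ht1
      have h2 : (2:ℝ) ^ k ≤ t⁻¹ := by
        rw [le_inv_comm₀ (by positivity) ht0]
        rwa [← one_div]
      calc ω (1 / 2 ^ (k+1)) * 2 ^ k ≤ ω t * t⁻¹ := by
            apply mul_le_mul h1 h2 (by positivity) (hωnonneg t ht0.le)
        _ = ω t / t := by rw [div_eq_mul_inv]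
    linarith [hconst ▸ hmono']
  -- summability via bounded partial sums
  apply summable_of_sum_range_le (c := 2 * ∫ t in (0:ℝ)..1, ω t / t)
  · intro k; exact hωnonneg _ (hpos (k+1)).le
  intro n
  calc ∑ k ∈ Finset.range n, ω (1 / 2 ^ (k+1))
      ≤ ∑ k ∈ Finset.range n, 2 * ∫ t in (1 / 2 ^ (k+1) : ℝ)..(1 / 2 ^ k : ℝ), ω t / t :=
        Finset.sum_le_sum fun k _ => hterm k
    _ = 2 * ∑ k ∈ Finset.range n, ∫ t in (1 / 2 ^ (k+1) : ℝ)..(1 / 2 ^ k : ℝ), ω t / t := by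
        rw [Finset.mul_sum]
    _ = 2 * ∫ t in (1 / 2 ^ n : ℝ)..(1:ℝ), ω t / t := by
        congr 1
        have : ∀ k ∈ Finset.range n, (∫ t in (1 / 2 ^ (k+1) : ℝ)..(1 / 2 ^ k : ℝ), ω t / t)
            = -∫ t in ((fun i => (1:ℝ) / 2 ^ i) k)..((fun i => (1:ℝ) / 2 ^ i) (k+1)), ω t / t := by
          intro k _
          rw [intervalIntegral.integral_symm]
        rw [Finset.sum_congr rfl this, Finset.sum_neg_distrib,
          intervalIntegral.sum_integral_adjacent_intervals (fun k _ => (hint k).symm),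
          ← intervalIntegral.integral_symm]
        norm_num
    _ ≤ 2 * ∫ t in (0:ℝ)..1, ω t / t := by
        apply mul_le_mul_of_nonneg_left _ two_pos.le
        apply intervalIntegral.integral_mono_interval (hpos n).le (hle n) le_rfl _ hωint
        filter_upwards [ae_restrict_mem measurableSet_Ioc] with t ht
        exact div_nonneg (hωnonneg t ht.1.le) (le_of_lt ht.1)

/-- Inverse theorem, domain part (Theorem 2, first conclusion).  `B` is realized as
multiplication by the measurable function `b` on `L²(μ)`; membership `x ∈ D(G(B))` means
`G(b(·))·x ∈ L²(μ)`.  If `E_r(x,B) ≤ (m/G(r))·ω(1/r)` for all `r > 0`, then `x ∈ D(G(B))`. -/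
theorem inverse_theorem_domain {X : Type*} [MeasurableSpace X] (μ : Measure X)
    (b : X → ℝ) (hb : Measurable b)
    (ω : ℝ → ℝ) (hωcont : ContinuousOn ω (Ici (0 : ℝ)))
    (hωmono : MonotoneOn ω (Ici (0 : ℝ))) (hωzero : ω 0 = 0)
    (hωnonneg : ∀ t, 0 ≤ t → 0 ≤ ω t)
    (c : ℝ) (hc : 0 < c) (hωdoubling : ∀ t > (0 : ℝ), ω (2 * t) ≤ c * ω t)
    (hωint : IntervalIntegrable (fun t => ω t / t) MeasureTheory.volume 0 1)
    (G : ℝ → ℝ) (hGmeas : Measurable G) (hGnonneg : ∀ t, 0 ≤ G t)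
    (hGeven : ∀ t, G (-t) = G t) (hGmono : MonotoneOn G (Ici (0 : ℝ)))
    (hGpos : ∀ lam > (0 : ℝ), 0 < G lam)
    (c₁ : ℝ) (hGdoubling : ∀ lam > (0 : ℝ), G (2 * lam) ≤ c₁ * G lam)
    (x : X → ℂ) (hx : MemLp x 2 μ)
    (m : ℝ) (hm : 0 < m)
    (happrox : ∀ r > (0 : ℝ),
      eLpNorm (fun s => if |b s| ≤ r then 0 else x s) 2 μ
        ≤ ENNReal.ofReal (m / G r * ω (1 / r))) :
    MemLp (fun s => (G (b s) : ℝ) * x s) 2 μ := by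
  have h2Z : (2 : ℝ≥0∞) ≠ 0 := by norm_num
  have h2T : (2 : ℝ≥0∞) ≠ ∞ := by norm_num
  have h2R : (2 : ℝ≥0∞).toReal = 2 := by norm_num
  have hxm := hx.1
  have habs : ∀ s, G (b s) = G |b s| := by
    intro s
    rcases le_or_gt 0 (b s) with h | h
    · rw [_root_.abs_of_nonneg h]
    · rw [_root_.abs_of_neg h]; exact (hGeven (b s)).symm
  have hc₁ : 0 < c₁ := by
    have h1 := hGdoubling 1 one_pos
    rw [mul_one] at h1
    have h2 := hGpos 1 one_pos
    have h3 := hGpos 2 two_pos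
    nlinarith
  -- pointwise bound
  have hbd : ∀ (C : ℝ) (s : X), G (b s) ≤ C →
      (‖(G (b s) : ℂ) * x s‖₊ : ℝ≥0∞) ^ (2:ℝ)
        ≤ ENNReal.ofReal C ^ (2:ℝ) * (‖x s‖₊ : ℝ≥0∞) ^ (2:ℝ) := by
    intro C s hC
    have hC0 : 0 ≤ C := (hGnonneg _).trans hC
    have hn : ‖(G (b s) : ℂ) * x s‖ ≤ C * ‖x s‖ := by
      rw [norm_mul, Complex.norm_real, Real.norm_eq_abs, _root_.abs_of_nonneg (hGnonneg _)]
      exact mul_le_mul_of_nonneg_right hC (norm_nonneg _)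
    have key : (‖(G (b s) : ℂ) * x s‖₊ : ℝ≥0∞) ≤ ENNReal.ofReal C * (‖x s‖₊ : ℝ≥0∞) := by
      calc (‖(G (b s) : ℂ) * x s‖₊ : ℝ≥0∞) = ENNReal.ofReal ‖(G (b s) : ℂ) * x s‖ :=
            (ofReal_norm _).symm
        _ ≤ ENNReal.ofReal (C * ‖x s‖) := ENNReal.ofReal_le_ofReal hn
        _ = ENNReal.ofReal C * ENNReal.ofReal ‖x s‖ := ENNReal.ofReal_mul hC0
        _ = ENNReal.ofReal C * (‖x s‖₊ : ℝ≥0∞) := by rw [ofReal_norm]; rfl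
    calc (‖(G (b s) : ℂ) * x s‖₊ : ℝ≥0∞) ^ (2:ℝ)
        ≤ (ENNReal.ofReal C * (‖x s‖₊ : ℝ≥0∞)) ^ (2:ℝ) :=
          ENNReal.rpow_le_rpow key two_pos.le
      _ = ENNReal.ofReal C ^ (2:ℝ) * (‖x s‖₊ : ℝ≥0∞) ^ (2:ℝ) :=
          ENNReal.mul_rpow_of_nonneg _ _ two_pos.le
  constructor
  · exact (Complex.measurable_ofReal.comp (hGmeas.comp hb)).aestronglyMeasurable.mul hxm
  rw [eLpNorm_lt_top_iff_lintegral_rpow_enorm_lt_top h2Z h2T, h2R]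
  -- tail bound in lintegral form
  have hSm : ∀ r : ℝ, MeasurableSet {s | r < |b s|} := fun r =>
    measurableSet_lt measurable_const hb.abs
  have htail : ∀ r > (0:ℝ), ∫⁻ s in {s | r < |b s|}, (‖x s‖₊ : ℝ≥0∞) ^ (2:ℝ) ∂μ
      ≤ ENNReal.ofReal (m / G r * ω (1 / r)) ^ (2:ℝ) := by
    intro r hr
    have h1 : ∫⁻ s, (‖(if |b s| ≤ r then 0 else x s)‖₊ : ℝ≥0∞) ^ (2:ℝ) ∂μ
        = ∫⁻ s in {s | r < |b s|}, (‖x s‖₊ : ℝ≥0∞) ^ (2:ℝ) ∂μ := by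
      rw [← lintegral_indicator (hSm r)]
      apply lintegral_congr
      intro s
      by_cases h : |b s| ≤ r
      · rw [if_pos h, Set.indicator_of_notMem (by simpa using h)]
        rw [nnnorm_zero, ENNReal.coe_zero, ENNReal.zero_rpow_of_pos two_pos]
      · rw [if_neg h, Set.indicator_of_mem (by simpa using not_le.mp h)]
    rw [← h1]; simp only [← enorm_eq_nnnorm]; rw [lintegral_rpow_enorm_eq_rpow_eLpNorm' two_pos]
    have : eLpNorm' (fun s => if |b s| ≤ r then 0 else x s) 2 μ
        = eLpNorm (fun s => if |b s| ≤ r then 0 else x s) 2 μ := by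
      rw [eLpNorm_eq_eLpNorm' h2Z h2T, h2R]
    rw [this]
    exact ENNReal.rpow_le_rpow (happrox r hr) two_pos.le
  -- split at |b| ≤ 1
  set F : X → ℝ≥0∞ := fun s => (‖(G (b s) : ℂ) * x s‖₊ : ℝ≥0∞) ^ (2:ℝ) with hF
  have hAm : MeasurableSet {s | |b s| ≤ 1} := measurableSet_le hb.abs measurable_const
  have hxint : ∫⁻ s, (‖x s‖₊ : ℝ≥0∞) ^ (2:ℝ) ∂μ < ∞ := by
    have := lintegral_rpow_enorm_lt_top_of_eLpNorm_lt_top h2Z h2T hx.2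
    rwa [h2R] at this
  have hsplit : ∫⁻ s, F s ∂μ
      = (∫⁻ s in {s | |b s| ≤ 1}, F s ∂μ) + ∫⁻ s in {s | 1 < |b s|}, F s ∂μ := by
    have hcompl : {s : X | |b s| ≤ 1}ᶜ = {s : X | 1 < |b s|} := by
      ext s; simp [not_le]
    rw [← lintegral_add_compl F hAm, hcompl]
  rw [show (fun s => (‖(G (b s) : ℂ) * x s‖₊ : ℝ≥0∞) ^ (2:ℝ)) = F from rfl] at *
  change ∫⁻ s, F s ∂μ < ∞; rw [hsplit]
  apply ENNReal.add_lt_top.mpr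
  constructor
  · -- bounded part
    calc ∫⁻ s in {s | |b s| ≤ 1}, F s ∂μ
        ≤ ∫⁻ s in {s | |b s| ≤ 1},
            ENNReal.ofReal (G 1) ^ (2:ℝ) * (‖x s‖₊ : ℝ≥0∞) ^ (2:ℝ) ∂μ := by
          apply setLIntegral_mono' hAm
          intro s hs
          apply hbd
          rw [habs s]
          exact hGmono (mem_Ici.mpr (abs_nonneg _)) (mem_Ici.mpr zero_le_one) hs
      _ = ENNReal.ofReal (G 1) ^ (2:ℝ)
            * ∫⁻ s in {s | |b s| ≤ 1}, (‖x s‖₊ : ℝ≥0∞) ^ (2:ℝ) ∂μ := by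
          rw [lintegral_const_mul' _ _ (ENNReal.rpow_ne_top_of_nonneg two_pos.le ENNReal.ofReal_ne_top)]
      _ ≤ ENNReal.ofReal (G 1) ^ (2:ℝ) * ∫⁻ s, (‖x s‖₊ : ℝ≥0∞) ^ (2:ℝ) ∂μ := by
          gcongr
          exact Measure.restrict_le_self
      _ < ∞ := ENNReal.mul_lt_top (ENNReal.rpow_lt_top_of_nonneg two_pos.le ENNReal.ofReal_ne_top) hxint
  · -- unbounded part: dyadic decomposition
    set T : ℕ → Set X := fun k => {s | (2:ℝ)^k < |b s|} ∩ {s | |b s| ≤ 2^(k+1)} with hTdef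
    have hTm : ∀ k, MeasurableSet (T k) :=
      fun k => (hSm _).inter (measurableSet_le hb.abs measurable_const)
    have hTdisj : Pairwise (Function.onFun Disjoint T) := by
      have key : ∀ k l : ℕ, k < l → Disjoint (T k) (T l) := by
        intro k l hkl
        rw [Set.disjoint_left]
        rintro s ⟨_, h2⟩ ⟨h3, _⟩
        have : (2:ℝ) ^ (k+1) ≤ 2 ^ l := by
          apply pow_le_pow_right₀ one_le_two hkl
        simp only [mem_setOf_eq] at h2 h3
        linarith
      intro k l hkl
      rcases hkl.lt_or_gt with h | h
      · exact key k l h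
      · exact (key l k h).symm
    have hTunion : (⋃ k, T k) = {s | 1 < |b s|} := by
      ext s
      simp only [mem_iUnion, mem_inter_iff, mem_setOf_eq]
      constructor
      · rintro ⟨k, hk1, _⟩
        have hk1' : (2:ℝ) ^ k < |b s| := hk1
        have : (1:ℝ) ≤ 2 ^ k := one_le_pow₀ one_le_two
        linarith
      · intro hs
        have hex : ∃ n : ℕ, |b s| ≤ 2 ^ n := by
          obtain ⟨n, hn⟩ := pow_unbounded_of_one_lt (|b s|) one_lt_two
          exact ⟨n, hn.le⟩
        classical
        set n := Nat.find hex with hn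
        have hn1 : |b s| ≤ 2 ^ n := Nat.find_spec hex
        have hn0 : n ≠ 0 := by
          intro h
          rw [h] at hn1
          simp at hn1
          linarith
        have hcancel : n - 1 + 1 = n := Nat.sub_add_cancel (Nat.one_le_iff_ne_zero.mpr hn0)
        refine ⟨n - 1, ?_, ?_⟩
        · have := Nat.find_min hex (m := n - 1) (Nat.sub_lt (Nat.pos_of_ne_zero hn0) one_pos)
          push_neg at this
          exact this
        · rw [hcancel]
          exact hn1
    have hpiece : ∀ k : ℕ, ∫⁻ s in T k, F s ∂μ
        ≤ ENNReal.ofReal (c₁ * m * ω (1 / 2 ^ k)) ^ (2:ℝ) := by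
      intro k
      have hgk : 0 < G (2 ^ k) := hGpos _ (by positivity)
      have hωk : 0 ≤ ω (1 / 2 ^ k) := hωnonneg _ (by positivity)
      calc ∫⁻ s in T k, F s ∂μ
          ≤ ∫⁻ s in T k,
              ENNReal.ofReal (G (2 ^ (k+1))) ^ (2:ℝ) * (‖x s‖₊ : ℝ≥0∞) ^ (2:ℝ) ∂μ := by
            apply setLIntegral_mono' (hTm k)
            rintro s ⟨_, hs2⟩
            apply hbd
            rw [habs s]
            exact hGmono (mem_Ici.mpr (abs_nonneg _)) (mem_Ici.mpr (by positivity)) hs2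
        _ = ENNReal.ofReal (G (2 ^ (k+1))) ^ (2:ℝ)
              * ∫⁻ s in T k, (‖x s‖₊ : ℝ≥0∞) ^ (2:ℝ) ∂μ := by
            rw [lintegral_const_mul' _ _ (ENNReal.rpow_ne_top_of_nonneg two_pos.le ENNReal.ofReal_ne_top)]
        _ ≤ ENNReal.ofReal (G (2 ^ (k+1))) ^ (2:ℝ)
              * ∫⁻ s in {s | (2:ℝ)^k < |b s|}, (‖x s‖₊ : ℝ≥0∞) ^ (2:ℝ) ∂μ := by
            gcongr
            exact Set.inter_subset_left
        _ ≤ ENNReal.ofReal (G (2 ^ (k+1))) ^ (2:ℝ)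
              * ENNReal.ofReal (m / G (2 ^ k) * ω (1 / 2 ^ k)) ^ (2:ℝ) := by
            gcongr
            exact htail _ (by positivity)
        _ = ENNReal.ofReal (G (2 ^ (k+1)) * (m / G (2 ^ k) * ω (1 / 2 ^ k))) ^ (2:ℝ) := by
            rw [ENNReal.ofReal_mul (hGnonneg _), ENNReal.mul_rpow_of_nonneg _ _ two_pos.le]
        _ ≤ ENNReal.ofReal (c₁ * m * ω (1 / 2 ^ k)) ^ (2:ℝ) := by
            apply ENNReal.rpow_le_rpow _ two_pos.le
            apply ENNReal.ofReal_le_ofReal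
            have h1 : G (2 ^ (k+1)) ≤ c₁ * G (2 ^ k) := by
              have := hGdoubling (2 ^ k) (by positivity)
              rwa [show (2:ℝ) * 2 ^ k = 2 ^ (k+1) by ring] at this
            calc G (2 ^ (k+1)) * (m / G (2 ^ k) * ω (1 / 2 ^ k))
                ≤ (c₁ * G (2 ^ k)) * (m / G (2 ^ k) * ω (1 / 2 ^ k)) := by
                  apply mul_le_mul_of_nonneg_right h1 (by positivity)
              _ = c₁ * m * ω (1 / 2 ^ k) := by field_simp
    calc ∫⁻ s in {s | 1 < |b s|}, F s ∂μ
        = ∑' k, ∫⁻ s in T k, F s ∂μ := by rw [← hTunion, lintegral_iUnion hTm hTdisj]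
      _ ≤ ∑' k, ENNReal.ofReal (c₁ * m * ω (1 / 2 ^ k)) ^ (2:ℝ) :=
          ENNReal.tsum_le_tsum hpiece
      _ = ∑' k, ENNReal.ofReal ((c₁ * m * ω (1 / 2 ^ k)) ^ (2:ℕ)) := by
          congr 1; ext k
          rw [show ((2:ℝ)) = ((2:ℕ):ℝ) by norm_num, ENNReal.rpow_natCast,
            ENNReal.ofReal_pow (mul_nonneg (mul_nonneg hc₁.le hm.le) (hωnonneg _ (by positivity)))]
      _ < ∞ := by
          have hsum : Summable (fun k : ℕ => (c₁ * m * ω (1 / 2 ^ k)) ^ (2:ℕ)) := by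
            have hdini := dini_summable ω hωmono hωnonneg hωint
            have hb2 : Summable (fun k : ℕ => ((c₁ * m) ^ 2 * ω 1) * ω (1 / 2 ^ k)) :=
              hdini.mul_left _
            refine Summable.of_nonneg_of_le (fun k => sq_nonneg _) (fun k => ?_) hb2
            have hωk : 0 ≤ ω (1 / 2 ^ k) := hωnonneg _ (by positivity)
            have hω1 : ω (1 / 2 ^ k) ≤ ω 1 := by
              apply hωmono (mem_Ici.mpr (by positivity)) (mem_Ici.mpr zero_le_one)
              rw [div_le_one (by positivity)]
              exact one_le_pow₀ one_le_two
            calc (c₁ * m * ω (1 / 2 ^ k)) ^ (2:ℕ)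
                = (c₁ * m) ^ 2 * (ω (1 / 2 ^ k) * ω (1 / 2 ^ k)) := by ring
              _ ≤ (c₁ * m) ^ 2 * (ω 1 * ω (1 / 2 ^ k)) :=
                  mul_le_mul_of_nonneg_left
                    (mul_le_mul_of_nonneg_right hω1 hωk) (sq_nonneg _)
              _ = ((c₁ * m) ^ 2 * ω 1) * ω (1 / 2 ^ k) := by ring
          rw [← ENNReal.ofReal_tsum_of_nonneg (fun k => sq_nonneg _) hsum]
          exact ENNReal.ofReal_lt_top
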